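/- arXiv:1703.00344 — 2 statements merged into one kernel-verified Lean document; each statement's English description precedes it below -/
import Mathlib

section
/- Let N ≥ 2, q ∈ (−1, 1), and let D_q[X] = qX + (1−q)·tr(X)·I₂/2 be the qubit depolarizing map. If √((1+|q|)/(1−|q|)) > (3+|q|)/(1+|q|), then the N-qubit uniform local depolarizing map D_q^{⊗N} is not absolutely separating with respect to the bipartition 2^k | 2^{N−k} for any k with 1 ≤ k ≤ N−1. In particular, this holds whenever |q| > 1/N. -/
open Matrix Kronecker BigOperators
open scoped ComplexOrder

noncomputable section


def IsDM {ι : Type*} [Fintype ι] (ρ : Matrix ι ι ℂ) : Prop :=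
  ρ.PosSemidef ∧ ρ.trace = 1

def IsSep {ι κ : Type*} [Fintype ι] [Fintype κ]
    (ρ : Matrix (ι × κ) (ι × κ) ℂ) : Prop :=
  ∃ (k : ℕ) (p : Fin k → ℝ) (A : Fin k → Matrix ι ι ℂ) (B : Fin k → Matrix κ κ ℂ),
    (∀ i, 0 ≤ p i) ∧ (∑ i, p i = 1) ∧ (∀ i, IsDM (A i)) ∧ (∀ i, IsDM (B i)) ∧
    ρ = ∑ i, (p i : ℂ) • (A i ⊗ₖ B i)

def IsAbsSep {ι κ : Type*} [Fintype ι] [Fintype κ] [DecidableEq ι] [DecidableEq κ]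
    (ρ : Matrix (ι × κ) (ι × κ) ℂ) : Prop :=
  ∀ U : Matrix (ι × κ) (ι × κ) ℂ, U * Uᴴ = 1 → IsSep (U * ρ * Uᴴ)

/-- `N`-fold tensor power `Φ^{⊗N}` of a linear map on `d × d` matrices. -/
def kronPowMap {d N : ℕ} (Φ : Matrix (Fin d) (Fin d) ℂ →ₗ[ℂ] Matrix (Fin d) (Fin d) ℂ)
    (X : Matrix (Fin N → Fin d) (Fin N → Fin d) ℂ) :
    Matrix (Fin N → Fin d) (Fin N → Fin d) ℂ :=
  Matrix.of fun f g => ∑ a : Fin N → Fin d, ∑ b : Fin N → Fin d,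
    (∏ j, Φ (Matrix.single (a j) (b j) 1) (f j) (g j)) * X a b

/-- Identification realizing the bipartition `2^k | 2^(N-k)` of `N` qubits. -/
def bipartEquiv (N k : ℕ) (h : k ≤ N) :
    (Fin N → Fin 2) ≃ Fin (2 ^ k) × Fin (2 ^ (N - k)) :=
  (finFunctionFinEquiv.trans
    (finCongr (by rw [← pow_add]; congr 1; omega))).trans finProdFinEquiv.symm

/-- The depolarizing map `D_q[X] = q X + (1-q) tr X · I / d`. -/
def depolL (d : ℕ) (q : ℝ) :
    Matrix (Fin d) (Fin d) ℂ →ₗ[ℂ] Matrix (Fin d) (Fin d) ℂ :=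
  (q : ℂ) • LinearMap.id +
    (((1 - q) / d : ℝ) : ℂ) •
      (Matrix.traceLinearMap (Fin d) ℂ ℂ).smulRight (1 : Matrix (Fin d) (Fin d) ℂ)

namespace Stmt14Aux

lemma sum_support_two {α : Type*} [Fintype α] [DecidableEq α] {i j : α} (hij : i ≠ j)
    (F : α → ℂ) (h : ∀ l, l ≠ i → l ≠ j → F l = 0) : ∑ l, F l = F i + F j := by
  rw [← Finset.sum_pair hij]
  refine (Finset.sum_subset (Finset.subset_univ _) fun x _ hx => ?_).symm
  simp only [Finset.mem_insert, Finset.mem_singleton, not_or] at hx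
  exact h x hx.1 hx.2

lemma sum_support_one {α : Type*} [Fintype α] [DecidableEq α] {i : α}
    (F : α → ℂ) (h : ∀ l, l ≠ i → F l = 0) : ∑ l, F l = F i :=
  Fintype.sum_eq_single i h

lemma psd_diag_real {n : Type*} [Fintype n] {A : Matrix n n ℂ} (hA : A.PosSemidef) (i : n) :
    A i i = ((A i i).re : ℂ) :=
  (Complex.conj_eq_iff_re.mp (hA.1.apply i i)).symm

lemma psd_diag_nonneg {n : Type*} [Fintype n] [DecidableEq n] {A : Matrix n n ℂ}
    (hA : A.PosSemidef) (i : n) : 0 ≤ (A i i).re := by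
  have h0 := hA.dotProduct_mulVec_nonneg (fun l => if l = i then 1 else 0)
  have hdot : dotProduct (star (fun l => if l = i then (1:ℂ) else 0))
      (A *ᵥ (fun l => if l = i then (1:ℂ) else 0)) = A i i := by
    simp only [dotProduct, Matrix.mulVec, Pi.star_apply]
    rw [sum_support_one (i := i)]
    · simp only [if_pos rfl, star_one, one_mul, dotProduct]
      rw [sum_support_one (i := i)]
      · simp
      · intro l hl; simp [if_neg hl]
    · intro l hl
      simp [if_neg hl]
  rw [hdot] at h0
  exact (Complex.nonneg_iff.mp h0).1

lemma psd_offdiag_sq {n : Type*} [Fintype n] [DecidableEq n] {A : Matrix n n ℂ}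
    (hA : A.PosSemidef) (i j : n) :
    ‖A i j‖ ^ 2 ≤ (A i i).re * (A j j).re := by
  rcases eq_or_ne i j with rfl | hij
  · rw [psd_diag_real hA i, Complex.norm_real, Real.norm_eq_abs, sq_abs]
    simp [Complex.ofReal_re, sq]
  · set a := (A i i).re with ha_def
    set b := (A j j).re with hb_def
    set w := A i j with hw_def
    set s := Complex.normSq w with hs_def
    have ha : 0 ≤ a := psd_diag_nonneg hA i
    have hb : 0 ≤ b := psd_diag_nonneg hA j
    have hs : 0 ≤ s := Complex.normSq_nonneg w
    have key : ∀ t : ℝ, 0 ≤ a * t^2 - 2 * s * t + s * b := by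
      intro t
      set x : n → ℂ := fun l => if l = i then (t:ℂ) else if l = j then -(starRingEnd ℂ) w else 0
        with hx_def
      have h0 := hA.dotProduct_mulVec_nonneg x
      have hmv : ∀ l, (A *ᵥ x) l = A l i * t + A l j * (-(starRingEnd ℂ) w) := by
        intro l
        simp only [Matrix.mulVec, dotProduct]
        rw [sum_support_two hij]
        · simp [hx_def, if_neg hij, if_neg (Ne.symm hij)]
        · intro m hmi hmj
          simp [hx_def, if_neg hmi, if_neg hmj]
      have hdot : dotProduct (star x) (A *ᵥ x) =
          ((t^2:ℝ):ℂ) * A i i - ((2*s*t:ℝ):ℂ) + ((s:ℝ):ℂ) * A j j := by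
        simp only [dotProduct, Pi.star_apply]
        rw [sum_support_two hij]
        · rw [hmv i, hmv j]
          have hji : A j i = (starRingEnd ℂ) w := by
            have h := hA.1.apply i j
            have h2 := congrArg star h
            rw [star_star] at h2
            rw [hw_def, starRingEnd_apply]; exact h2
          have hconj : w * (starRingEnd ℂ) w = ((s:ℝ):ℂ) := Complex.mul_conj w
          simp only [hx_def, if_pos rfl, if_neg (Ne.symm hij), if_neg hij,
            eq_self_iff_true, if_true, star_neg, RCLike.star_def, Complex.conj_conj,
            Complex.conj_ofReal]
          rw [hji, ← hw_def]
          push_cast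
          linear_combination (A j j - 2*(t:ℂ)) * hconj
        · intro l hli hlj
          simp [hx_def, if_neg hli, if_neg hlj]
      rw [hdot] at h0
      have hre := (Complex.nonneg_iff.mp h0).1
      simp only [Complex.sub_re, Complex.add_re, Complex.mul_re, Complex.ofReal_re,
        Complex.ofReal_im, zero_mul, sub_zero] at hre
      nlinarith [hre]
    have goal : s ≤ a * b := by
      rcases eq_or_lt_of_le ha with hae | hap
      · nlinarith [key (b+1), mul_nonneg hs hb]
      · rcases eq_or_lt_of_le hs with hse | hsp
        · rw [← hse]; exact mul_nonneg ha hb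
        · have h1 := key (s/a)
          have e1 : a * (s/a)^2 = s * (s/a) := by field_simp
          have h2 : s * (s/a) ≤ s * b := by nlinarith
          have h3 : s/a ≤ b := le_of_mul_le_mul_left h2 hsp
          calc s = (s/a) * a := by field_simp
          _ ≤ b * a := mul_le_mul_of_nonneg_right h3 (le_of_lt hap)
          _ = a * b := mul_comm b a
    rwa [Complex.sq_norm]


lemma sep_entry_bound {ι κ : Type*} [Fintype ι] [Fintype κ] [DecidableEq ι] [DecidableEq κ]
    {M : Matrix (ι × κ) (ι × κ) ℂ} (h : IsSep M) (i0 i1 : ι) (j0 j1 : κ) :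
    ‖M (i0, j0) (i1, j1)‖ ^ 2 ≤ (M (i0, j1) (i0, j1)).re * (M (i1, j0) (i1, j0)).re := by
  obtain ⟨n, p, A, B, hp, hsum, hA, hB, hM⟩ := h
  have hent : ∀ x y : ι × κ, M x y = ∑ i, (p i : ℂ) * (A i x.1 y.1 * B i x.2 y.2) := by
    intro x y
    rw [hM]
    rw [Matrix.sum_apply]
    refine Finset.sum_congr rfl fun i _ => ?_
    simp [Matrix.kroneckerMap_apply, smul_eq_mul]
  set a0 : Fin n → ℝ := fun i => (A i i0 i0).re with ha0
  set a1 : Fin n → ℝ := fun i => (A i i1 i1).re with ha1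
  set b0 : Fin n → ℝ := fun i => (B i j0 j0).re with hb0
  set b1 : Fin n → ℝ := fun i => (B i j1 j1).re with hb1
  have ha0n : ∀ i, 0 ≤ a0 i := fun i => psd_diag_nonneg (hA i).1 i0
  have ha1n : ∀ i, 0 ≤ a1 i := fun i => psd_diag_nonneg (hA i).1 i1
  have hb0n : ∀ i, 0 ≤ b0 i := fun i => psd_diag_nonneg (hB i).1 j0
  have hb1n : ∀ i, 0 ≤ b1 i := fun i => psd_diag_nonneg (hB i).1 j1
  -- diagonal entries
  have hdiag1 : (M (i0, j1) (i0, j1)).re = ∑ i, p i * (a0 i * b1 i) := by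
    rw [hent]
    rw [Complex.re_sum]
    refine Finset.sum_congr rfl fun i _ => ?_
    rw [psd_diag_real (hA i).1 i0, psd_diag_real (hB i).1 j1]
    push_cast
    simp [Complex.ofReal_re]; left; rfl
  have hdiag2 : (M (i1, j0) (i1, j0)).re = ∑ i, p i * (a1 i * b0 i) := by
    rw [hent]
    rw [Complex.re_sum]
    refine Finset.sum_congr rfl fun i _ => ?_
    rw [psd_diag_real (hA i).1 i1, psd_diag_real (hB i).1 j0]
    push_cast
    simp [Complex.ofReal_re]; left; rfl
  -- bound on the off-diagonal entry
  have habs : ‖M (i0, j0) (i1, j1)‖ ≤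
      ∑ i, p i * (Real.sqrt (a0 i * a1 i) * Real.sqrt (b0 i * b1 i)) := by
    rw [hent]
    refine le_trans (norm_sum_le _ _) (Finset.sum_le_sum fun i _ => ?_)
    rw [norm_mul, norm_mul, Complex.norm_real, Real.norm_eq_abs, abs_of_nonneg (hp i)]
    refine mul_le_mul_of_nonneg_left ?_ (hp i)
    have h1 : ‖A i i0 i1‖ ≤ Real.sqrt (a0 i * a1 i) :=
      (Real.le_sqrt (norm_nonneg _) (mul_nonneg (ha0n i) (ha1n i))).mpr
        (psd_offdiag_sq (hA i).1 i0 i1)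
    have h2 : ‖B i j0 j1‖ ≤ Real.sqrt (b0 i * b1 i) :=
      (Real.le_sqrt (norm_nonneg _) (mul_nonneg (hb0n i) (hb1n i))).mpr
        (psd_offdiag_sq (hB i).1 j0 j1)
    exact mul_le_mul h1 h2 (norm_nonneg _) (Real.sqrt_nonneg _)
  -- Cauchy-Schwarz
  have hcs : (∑ i, p i * (Real.sqrt (a0 i * a1 i) * Real.sqrt (b0 i * b1 i))) ^ 2 ≤
      (∑ i, p i * (a0 i * b1 i)) * (∑ i, p i * (a1 i * b0 i)) := by
    refine Finset.sum_sq_le_sum_mul_sum_of_sq_eq_mul Finset.univ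
      (fun i _ => mul_nonneg (hp i) (mul_nonneg (ha0n i) (hb1n i)))
      (fun i _ => mul_nonneg (hp i) (mul_nonneg (ha1n i) (hb0n i)))
      (fun i _ => ?_)
    have e1 : Real.sqrt (a0 i * a1 i) ^ 2 = a0 i * a1 i :=
      Real.sq_sqrt (mul_nonneg (ha0n i) (ha1n i))
    have e2 : Real.sqrt (b0 i * b1 i) ^ 2 = b0 i * b1 i :=
      Real.sq_sqrt (mul_nonneg (hb0n i) (hb1n i))
    calc (p i * (Real.sqrt (a0 i * a1 i) * Real.sqrt (b0 i * b1 i))) ^ 2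
        = p i ^ 2 * (Real.sqrt (a0 i * a1 i) ^ 2 * Real.sqrt (b0 i * b1 i) ^ 2) := by ring
      _ = p i * (a0 i * b1 i) * (p i * (a1 i * b0 i)) := by rw [e1, e2]; ring
  have hnn : (0:ℝ) ≤ ∑ i, p i * (Real.sqrt (a0 i * a1 i) * Real.sqrt (b0 i * b1 i)) :=
    Finset.sum_nonneg fun i _ => mul_nonneg (hp i)
      (mul_nonneg (Real.sqrt_nonneg _) (Real.sqrt_nonneg _))
  rw [hdiag1, hdiag2]
  calc ‖M (i0, j0) (i1, j1)‖ ^ 2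
      ≤ (∑ i, p i * (Real.sqrt (a0 i * a1 i) * Real.sqrt (b0 i * b1 i))) ^ 2 :=
        pow_le_pow_left₀ (norm_nonneg _) habs 2
    _ ≤ _ := hcs


lemma nn2 (n : ℕ) : 0 ≤ (n:ℝ) * ((n:ℝ) - 1) := by
  rcases Nat.eq_zero_or_pos n with h | h
  · simp [h]
  · have : (1:ℝ) ≤ n := by exact_mod_cast h
    nlinarith
lemma nn3 (n : ℕ) : 0 ≤ (n:ℝ) * ((n:ℝ) - 1) * ((n:ℝ) - 2) := by
  rcases Nat.lt_or_ge n 2 with h | h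
  · interval_cases n <;> norm_num
  · have : (2:ℝ) ≤ n := by exact_mod_cast h
    have h0 : (0:ℝ) ≤ n := Nat.cast_nonneg n
    have := nn2 n
    nlinarith

lemma binom3 (x : ℝ) (hx : 0 ≤ x) (n : ℕ) :
    1 + (n:ℝ)*x + ((n:ℝ)*((n:ℝ)-1)/2)*x^2 + ((n:ℝ)*((n:ℝ)-1)*((n:ℝ)-2)/6)*x^3 ≤ (1+x)^n := by
  induction n with
  | zero => norm_num
  | succ n ih =>
    have hmul : (1 + (n:ℝ)*x + ((n:ℝ)*((n:ℝ)-1)/2)*x^2 + ((n:ℝ)*((n:ℝ)-1)*((n:ℝ)-2)/6)*x^3)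
        * (1+x) ≤ (1+x)^(n+1) := by
      rw [pow_succ]
      exact mul_le_mul_of_nonneg_right ih (by linarith)
    have hq : 0 ≤ ((n:ℝ)*((n:ℝ)-1)*((n:ℝ)-2)) * x^4 := mul_nonneg (nn3 n) (pow_nonneg hx 4)
    push_cast
    nlinarith [hmul, hq]

lemma six_lt (N : ℕ) (hN : 2 ≤ N) : (6:ℝ) < (1 + 2/((N:ℝ)-1))^N := by
  have h2 : (2:ℝ) ≤ N := by exact_mod_cast hN
  set d : ℝ := (N:ℝ) - 1 with hd
  have hd1 : 1 ≤ d := by simp [hd]; linarith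
  have hd0 : 0 < d := by linarith
  set x : ℝ := 2/d with hxdef
  have hx0 : 0 < x := by positivity
  have hx2 : x ≤ 2 := by rw [hxdef, div_le_iff₀ hd0]; nlinarith
  have hb := binom3 x (le_of_lt hx0) N
  refine lt_of_lt_of_le ?_ hb
  have hNd : (N:ℝ) = d + 1 := by rw [hd]; ring
  rw [hNd]
  have e1 : (d+1)*x = 2 + x := by rw [hxdef]; field_simp
  have e2 : ((d+1)*((d+1)-1)/2)*x^2 = 2 + x := by rw [hxdef]; field_simp; ring
  have e3 : ((d+1)*((d+1)-1)*((d+1)-2)/6)*x^3 = 4/3 - x^2/3 := by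
    rw [hxdef]; field_simp; ring
  rw [e1, e2, e3]
  nlinarith [hx0, hx2]

/-- main numeric reduction: the key power inequality -/
lemma pow_gap (N : ℕ) (hN : 2 ≤ N) (t : ℝ) (ht0 : 0 ≤ t) (ht1 : t < 1)
    (hr : 6 < ((1+t)/(1-t))^N) :
    6 * ((1-t)/2)^N < ((1+t)/2)^N := by
  have hm : (0:ℝ) < (1-t)/2 := by linarith
  have hp : ((1+t)/2) = ((1-t)/2) * ((1+t)/(1-t)) := by
    have h1t : (1:ℝ) - t ≠ 0 := by linarith
    field_simp
  rw [hp, mul_pow]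
  have := mul_lt_mul_of_pos_left hr (pow_pos hm N)
  calc 6 * ((1-t)/2)^N = ((1-t)/2)^N * 6 := by ring
    _ < ((1-t)/2)^N * ((1+t)/(1-t))^N := this
    _ = _ := by ring

lemma hyp1_pow (N : ℕ) (hN : 2 ≤ N) (t : ℝ) (ht0 : 0 ≤ t) (ht1 : t < 1)
    (hyp : (3 + t) / (1 + t) < Real.sqrt ((1 + t) / (1 - t))) :
    6 * ((1-t)/2)^N < ((1+t)/2)^N := by
  refine pow_gap N hN t ht0 ht1 ?_
  have ht12 : (1:ℝ)/2 ≤ t := by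
    by_contra hc
    push_neg at hc
    have h1 : Real.sqrt ((1+t)/(1-t)) < 2 := by
      rw [Real.sqrt_lt' (by norm_num : (0:ℝ) < 2)]
      rw [div_lt_iff₀ (by linarith)]
      nlinarith
    have h2 : (2:ℝ) ≤ (3+t)/(1+t) := by
      rw [le_div_iff₀ (by linarith)]
      nlinarith
    linarith
  have hr3 : (3:ℝ) ≤ (1+t)/(1-t) := by
    rw [le_div_iff₀ (by linarith)]
    linarith
  have h9 : (9:ℝ) ≤ ((1+t)/(1-t))^N :=
    calc (9:ℝ) = 3^2 := by norm_num
      _ ≤ 3^N := pow_le_pow_right₀ (by norm_num) hN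
      _ ≤ ((1+t)/(1-t))^N := pow_le_pow_left₀ (by norm_num) hr3 N
  linarith

lemma hyp2_pow (N : ℕ) (hN : 2 ≤ N) (t : ℝ) (ht1 : t < 1)
    (hyp : 1 / (N:ℝ) < t) :
    6 * ((1-t)/2)^N < ((1+t)/2)^N := by
  have hNR : (2:ℝ) ≤ N := by exact_mod_cast hN
  have hN0 : (0:ℝ) < N := by linarith
  have ht0 : 0 ≤ t := le_of_lt (lt_trans (by positivity : (0:ℝ) < 1/(N:ℝ)) hyp)
  refine pow_gap N hN t ht0 ht1 ?_
  set d : ℝ := (N:ℝ) - 1 with hd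
  have hd1 : 1 ≤ d := by rw [hd]; linarith
  have hd0 : 0 < d := by linarith
  have hs6 := six_lt N hN
  rw [← hd] at hs6
  -- 1 + 2/d < (1+t)/(1-t)
  have hstep : 1 + 2/d < (1+t)/(1-t) := by
    have htN : 1 < t * N := by
      rw [div_lt_iff₀ hN0] at hyp
      linarith
    have hNd : (N:ℝ) = d + 1 := by rw [hd]; ring
    rw [hNd] at htN
    have e : 1 + 2/d = (d+2)/d := by field_simp
    rw [e, div_lt_div_iff₀ hd0 (by linarith)]
    nlinarith
  have hpos : (0:ℝ) ≤ 1 + 2/d := by positivity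
  calc (6:ℝ) < (1 + 2/d)^N := hs6
    _ < ((1+t)/(1-t))^N := by
        apply pow_lt_pow_left₀ hstep hpos
        omega

def rc : ℝ := (Real.sqrt 2)⁻¹

lemma rc_mul : ((rc:ℝ):ℂ) * ((rc:ℝ):ℂ) = 1/2 := by
  rw [← Complex.ofReal_mul]
  have h : (rc:ℝ) * rc = 1/2 := by
    rw [rc, ← mul_inv, Real.mul_self_sqrt (by norm_num)]
    norm_num
  rw [h]
  push_cast
  ring

variable {α : Type*} [Fintype α] [DecidableEq α]

def rotU (y1 y2 : α) : Matrix α α ℂ :=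
  (1 : Matrix α α ℂ) + (((rc:ℝ):ℂ) - 1) • Matrix.single y1 y1 (1:ℂ)
    + ((rc:ℝ):ℂ) • Matrix.single y1 y2 (1:ℂ)
    - ((rc:ℝ):ℂ) • Matrix.single y2 y1 (1:ℂ)
    + (((rc:ℝ):ℂ) - 1) • Matrix.single y2 y2 (1:ℂ)

def diagC (D : α → ℝ) : Matrix α α ℂ :=
  Matrix.of fun x y => if x = y then ((D x : ℝ) : ℂ) else 0

lemma stdBasis_conjT (i j : α) :
    (Matrix.single i j (1:ℂ))ᴴ = Matrix.single j i (1:ℂ) := by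
  ext a b
  simp only [Matrix.conjTranspose_apply, Matrix.single, Matrix.of_apply]
  rw [apply_ite (star : ℂ → ℂ)]
  simp [and_comm]

lemma rotU_conjT (y1 y2 : α) :
    (rotU y1 y2)ᴴ = (1 : Matrix α α ℂ) + (((rc:ℝ):ℂ) - 1) • Matrix.single y1 y1 (1:ℂ)
      - ((rc:ℝ):ℂ) • Matrix.single y1 y2 (1:ℂ)
      + ((rc:ℝ):ℂ) • Matrix.single y2 y1 (1:ℂ)
      + (((rc:ℝ):ℂ) - 1) • Matrix.single y2 y2 (1:ℂ) := by
  simp only [rotU, Matrix.conjTranspose_add, Matrix.conjTranspose_sub,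
    Matrix.conjTranspose_smul, Matrix.conjTranspose_one, stdBasis_conjT,
    star_sub, star_one, RCLike.star_def, Complex.conj_ofReal]
  abel

lemma rotU_unitary {y1 y2 : α} (h12 : y1 ≠ y2) : rotU y1 y2 * (rotU y1 y2)ᴴ = 1 := by
  have hc := rc_mul
  rw [rotU_conjT, rotU]
  simp only [add_mul, mul_add, sub_mul, mul_sub, smul_mul_assoc, Matrix.mul_smul,
    Matrix.smul_mul, one_mul, mul_one, smul_smul,
    Matrix.single_mul_single_same, Matrix.single_mul_single_of_ne, ne_eq, h12,
    Ne.symm h12, not_false_iff, smul_zero, mul_one, add_zero, zero_add, sub_zero]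
  match_scalars
  all_goals try ring
  all_goals linear_combination 2*hc


lemma rotU_row1 {y1 y2 : α} (h12 : y1 ≠ y2) (y : α) :
    rotU y1 y2 y1 y = (if y = y1 then ((rc:ℝ):ℂ) else if y = y2 then ((rc:ℝ):ℂ) else 0) := by
  by_cases h1 : y = y1
  · subst h1
    simp [rotU, Matrix.add_apply, Matrix.sub_apply, Matrix.smul_apply, Matrix.one_apply,
      h12, Ne.symm h12]
  · by_cases h2 : y = y2
    · subst h2
      simp [rotU, Matrix.add_apply, Matrix.sub_apply, Matrix.smul_apply, Matrix.one_apply,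
        h12, Ne.symm h12]
    · simp [rotU, Matrix.add_apply, Matrix.sub_apply, Matrix.smul_apply, Matrix.one_apply,
        h12, Ne.symm h12, h1, h2, Ne.symm h1, Ne.symm h2]

lemma rotU_row2 {y1 y2 : α} (h12 : y1 ≠ y2) (y : α) :
    rotU y1 y2 y2 y = (if y = y1 then -((rc:ℝ):ℂ) else if y = y2 then ((rc:ℝ):ℂ) else 0) := by
  by_cases h1 : y = y1
  · subst h1
    simp [rotU, Matrix.add_apply, Matrix.sub_apply, Matrix.smul_apply, Matrix.one_apply,
      h12, Ne.symm h12]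
  · by_cases h2 : y = y2
    · subst h2
      simp [rotU, Matrix.add_apply, Matrix.sub_apply, Matrix.smul_apply, Matrix.one_apply,
        h12, Ne.symm h12]
    · simp [rotU, Matrix.add_apply, Matrix.sub_apply, Matrix.smul_apply, Matrix.one_apply,
        h12, Ne.symm h12, h1, h2, Ne.symm h1, Ne.symm h2]

lemma rotU_row_other {y1 y2 x : α} (hx1 : x ≠ y1) (hx2 : x ≠ y2) (y : α) :
    rotU y1 y2 x y = if x = y then 1 else 0 := by
  simp [rotU, Matrix.add_apply, Matrix.sub_apply, Matrix.smul_apply, Matrix.one_apply,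
    Matrix.single, hx1, hx2, Ne.symm hx1, Ne.symm hx2]

/-- entry formula for the conjugated diagonal matrix -/
lemma conj_diag_apply {y1 y2 : α} (D : α → ℝ) (x z : α) :
    (rotU y1 y2 * diagC D * (rotU y1 y2)ᴴ) x z
      = ∑ y, rotU y1 y2 x y * ((D y : ℝ):ℂ) * star (rotU y1 y2 z y) := by
  rw [Matrix.mul_apply]
  refine Finset.sum_congr rfl fun y _ => ?_
  rw [Matrix.conjTranspose_apply]
  congr 1
  rw [Matrix.mul_apply]
  rw [sum_support_one (i := y)]
  · simp [diagC]
  · intro y' hy'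
    simp [diagC, if_neg (fun h : y' = y => hy' h), mul_comm]

lemma rotU_11 {y1 y2 : α} (h12 : y1 ≠ y2) : rotU y1 y2 y1 y1 = ((rc:ℝ):ℂ) := by
  rw [rotU_row1 h12]; simp
lemma rotU_12 {y1 y2 : α} (h12 : y1 ≠ y2) : rotU y1 y2 y1 y2 = ((rc:ℝ):ℂ) := by
  rw [rotU_row1 h12]; simp [if_neg (Ne.symm h12)]
lemma rotU_21 {y1 y2 : α} (h12 : y1 ≠ y2) : rotU y1 y2 y2 y1 = -((rc:ℝ):ℂ) := by
  rw [rotU_row2 h12]; simp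
lemma rotU_22 {y1 y2 : α} (h12 : y1 ≠ y2) : rotU y1 y2 y2 y2 = ((rc:ℝ):ℂ) := by
  rw [rotU_row2 h12]; simp [if_neg (Ne.symm h12)]

lemma conj_diag_12 {y1 y2 : α} (h12 : y1 ≠ y2) (D : α → ℝ) :
    (rotU y1 y2 * diagC D * (rotU y1 y2)ᴴ) y1 y2 = (((D y2 - D y1 : ℝ)):ℂ)/2 := by
  rw [conj_diag_apply]
  rw [sum_support_two h12]
  · rw [rotU_11 h12, rotU_12 h12, rotU_21 h12, rotU_22 h12]
    have hc := rc_mul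
    simp only [Complex.star_def, map_neg, Complex.conj_ofReal]
    push_cast
    linear_combination (((D y2:ℂ)) - ((D y1:ℂ))) * hc
  · intro l hl1 hl2
    rw [rotU_row1 h12, if_neg hl1, if_neg hl2, zero_mul, zero_mul]

lemma conj_diag_diag {y1 y2 x : α} (hx1 : x ≠ y1) (hx2 : x ≠ y2) (D : α → ℝ) :
    (rotU y1 y2 * diagC D * (rotU y1 y2)ᴴ) x x = ((D x : ℝ):ℂ) := by
  rw [conj_diag_apply]
  rw [sum_support_one (i := x)]
  · rw [rotU_row_other hx1 hx2, if_pos rfl]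
    simp
  · intro l hl
    rw [rotU_row_other hx1 hx2, if_neg (fun h : x = l => hl h.symm), zero_mul, zero_mul]


/-! ### the initial state -/

def zf (N : ℕ) : Fin N → Fin 2 := fun _ => 0

def rho0 (N : ℕ) : Matrix (Fin N → Fin 2) (Fin N → Fin 2) ℂ :=
  Matrix.of fun a b => (if a = zf N then 1 else 0) * (if b = zf N then 1 else 0)

lemma rho0_DM (N : ℕ) : IsDM (rho0 N) := by
  refine ⟨posSemidef_iff_dotProduct_mulVec.mpr ⟨?_, ?_⟩, ?_⟩
  · ext a b
    simp only [Matrix.conjTranspose_apply, rho0, Matrix.of_apply]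
    rw [mul_comm]
    simp [apply_ite (starRingEnd ℂ)]
  · intro x
    have hmv : ∀ a, (rho0 N *ᵥ x) a = (if a = zf N then 1 else 0) * x (zf N) := by
      intro a
      simp only [Matrix.mulVec, dotProduct, rho0, Matrix.of_apply]
      rw [sum_support_one (i := zf N)]
      · simp
      · intro b hb; simp [if_neg hb]
    have hdot : dotProduct (star x) (rho0 N *ᵥ x) = star (x (zf N)) * x (zf N) := by
      simp only [dotProduct, Pi.star_apply]
      rw [sum_support_one (i := zf N)]
      · rw [hmv]; simp
      · intro a ha; rw [hmv]; simp [if_neg ha]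
    rw [hdot]
    exact star_mul_self_nonneg _
  · simp only [Matrix.trace, Matrix.diag, rho0, Matrix.of_apply]
    rw [sum_support_one (i := zf N)]
    · simp
    · intro a ha; simp [if_neg ha]

/-! ### the output of the depolarizing channel -/

def cR (q : ℝ) : Fin 2 → ℝ := fun s => if s = 0 then (1+q)/2 else (1-q)/2

lemma depol_apply (q : ℝ) (s t : Fin 2) :
    (depolL 2 q) (Matrix.single (0 : Fin 2) 0 1) s t
      = if s = t then ((cR q s : ℝ) : ℂ) else 0 := by
  have htr : Matrix.trace (Matrix.single (0 : Fin 2) 0 (1:ℂ)) = 1 := by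
    simp [Matrix.trace, Matrix.diag, Fin.sum_univ_two, Matrix.single, Matrix.of_apply]
  simp only [depolL, LinearMap.add_apply, LinearMap.smul_apply, LinearMap.id_apply,
    LinearMap.smulRight_apply, Matrix.traceLinearMap_apply, htr, Matrix.add_apply,
    Matrix.smul_apply, smul_eq_mul, one_smul]
  fin_cases s <;> fin_cases t <;>
    simp [Matrix.single, Matrix.of_apply, Matrix.one_apply, cR] <;> push_cast <;> ring

lemma kron_rho0 (N : ℕ) (q : ℝ) :
    kronPowMap (depolL 2 q) (rho0 N) =
      Matrix.of fun f g => if f = g then ((∏ l, cR q (f l) : ℝ) : ℂ) else 0 := by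
  ext f g
  simp only [kronPowMap, Matrix.of_apply, rho0]
  have collapse : ∑ a : Fin N → Fin 2, ∑ b : Fin N → Fin 2,
      (∏ j, (depolL 2 q) (Matrix.single (a j) (b j) 1) (f j) (g j)) *
        ((if a = zf N then 1 else 0) * (if b = zf N then 1 else 0))
      = ∏ j, (depolL 2 q) (Matrix.single (zf N j) (zf N j) 1) (f j) (g j) := by
    rw [sum_support_one (i := zf N)]
    · rw [sum_support_one (i := zf N)]
      · simp
      · intro b hb; simp [if_neg hb]
    · intro a ha
      apply Finset.sum_eq_zero
      intro b _
      simp [if_neg ha]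
  rw [collapse]
  simp only [zf, depol_apply]
  by_cases hfg : f = g
  · subst hfg
    simp only [if_pos rfl]
    push_cast
    rfl
  · obtain ⟨j0, hj0⟩ := Function.ne_iff.mp hfg
    rw [if_neg hfg]
    exact Finset.prod_eq_zero (Finset.mem_univ j0) (by simp [if_neg hj0])

/-! ### values of the bipartition equivalence -/

lemma bip_fst (N k : ℕ) (h : k ≤ N) (f : Fin N → Fin 2) :
    ((bipartEquiv N k h f).1 : ℕ) = (∑ l : Fin N, ((f l : ℕ) * 2^(l:ℕ))) / 2^(N-k) := by
  simp [bipartEquiv, Equiv.trans_apply, finProdFinEquiv, Fin.coe_divNat,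
    finFunctionFinEquiv_apply]

lemma bip_snd (N k : ℕ) (h : k ≤ N) (f : Fin N → Fin 2) :
    ((bipartEquiv N k h f).2 : ℕ) = (∑ l : Fin N, ((f l : ℕ) * 2^(l:ℕ))) % 2^(N-k) := by
  simp [bipartEquiv, Equiv.trans_apply, finProdFinEquiv, Fin.coe_modNat,
    finFunctionFinEquiv_apply]

def gab (N k : ℕ) (a b : Fin 2) : Fin N → Fin 2 := fun l => if (l:ℕ) < N - k then b else a

lemma geo_sum : ∀ n : ℕ, ∑ i ∈ Finset.range n, 2^i = 2^n - 1 := by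
  intro n
  induction n with
  | zero => simp
  | succ n ih =>
    rw [Finset.sum_range_succ, ih]
    have : 0 < 2^n := Nat.pow_pos (by norm_num)
    omega

lemma S_gab (N k : ℕ) (hk : k ≤ N) (a b : Fin 2) :
    ∑ l : Fin N, ((gab N k a b l : ℕ) * 2^(l:ℕ))
      = (b:ℕ)*(2^(N-k) - 1) + 2^(N-k) * ((a:ℕ)*(2^k - 1)) := by
  have h1 : ∑ l : Fin N, ((gab N k a b l : ℕ) * 2^(l:ℕ))
      = ∑ i ∈ Finset.range N, (if i < N - k then (b:ℕ) else (a:ℕ)) * 2^i := by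
    have e : ∀ l : Fin N, ((gab N k a b l : ℕ) * 2^(l:ℕ))
        = (fun i : ℕ => (if i < N - k then (b:ℕ) else (a:ℕ)) * 2^i) (l:ℕ) := by
      intro l; simp only [gab]
      by_cases hl : (l:ℕ) < N - k <;> simp [hl]
    exact (Finset.sum_congr rfl (fun l _ => e l)).trans
      (Fin.sum_univ_eq_sum_range (fun i => (if i < N - k then (b:ℕ) else (a:ℕ)) * 2^i) N)
  rw [h1]
  have h2 : ∀ i : ℕ, (if i < N - k then (b:ℕ) else (a:ℕ)) * 2^i
      = (if i < N - k then (b:ℕ) * 2^i else (a:ℕ) * 2^i) := by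
    intro i; by_cases hi : i < N - k <;> simp [hi]
  simp_rw [h2]
  rw [Finset.sum_ite]
  have hflt : Finset.filter (fun i => i < N - k) (Finset.range N) = Finset.range (N-k) := by
    ext i; simp; omega
  have hfge : Finset.filter (fun i => ¬ i < N - k) (Finset.range N) = Finset.Ico (N-k) N := by
    ext i; simp [Finset.mem_Ico]; omega
  rw [hflt, hfge, ← Finset.mul_sum, ← Finset.mul_sum, geo_sum]
  have hico : ∑ i ∈ Finset.Ico (N-k) N, 2^i = 2^(N-k) * (2^k - 1) := by
    have hcons : (∑ i ∈ Finset.Ico 0 (N-k), 2^i) + ∑ i ∈ Finset.Ico (N-k) N, 2^i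
        = ∑ i ∈ Finset.Ico 0 N, 2^i :=
      Finset.sum_Ico_consecutive _ (Nat.zero_le _) (by omega)
    simp only [← Finset.range_eq_Ico] at hcons
    rw [geo_sum, geo_sum] at hcons
    have hpow : 2^(N-k) * 2^k = 2^N := by rw [← pow_add]; congr 1; omega
    have p1 : 0 < 2^(N-k) := Nat.pow_pos (by norm_num)
    have p2 : 0 < 2^k := Nat.pow_pos (by norm_num)
    have p3 : 0 < 2^N := Nat.pow_pos (by norm_num)
    have hstep : 2^(N-k)*(2^k - 1) + 2^(N-k) = 2^N := by
      have e1 : (2^k - 1) + 1 = 2^k := by omega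
      calc 2^(N-k)*(2^k-1) + 2^(N-k) = 2^(N-k)*((2^k - 1)+1) := by ring
        _ = 2^N := by rw [e1, hpow]
    omega
  rw [hico]
  ring

lemma w_fst (N k : ℕ) (hk : k ≤ N) (a b : Fin 2) :
    (((bipartEquiv N k hk) (gab N k a b)).1 : ℕ) = (a:ℕ) * (2^k - 1) := by
  rw [bip_fst, S_gab N k hk]
  have p1 : 0 < 2^(N-k) := Nat.pow_pos (by norm_num)
  rw [Nat.add_mul_div_left _ _ p1]
  have hb01 : (b:ℕ) = 0 ∨ (b:ℕ) = 1 := by omega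
  have hlt : (b:ℕ)*(2^(N-k) - 1) < 2^(N-k) := by
    rcases hb01 with h|h
    · rw [h, zero_mul]; exact p1
    · rw [h, one_mul]; omega
  rw [Nat.div_eq_of_lt hlt, zero_add]

lemma w_snd (N k : ℕ) (hk : k ≤ N) (a b : Fin 2) :
    (((bipartEquiv N k hk) (gab N k a b)).2 : ℕ) = (b:ℕ) * (2^(N-k) - 1) := by
  rw [bip_snd, S_gab N k hk]
  have p1 : 0 < 2^(N-k) := Nat.pow_pos (by norm_num)
  rw [Nat.add_mul_mod_self_left]
  have hb01 : (b:ℕ) = 0 ∨ (b:ℕ) = 1 := by omega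
  have hlt : (b:ℕ)*(2^(N-k) - 1) < 2^(N-k) := by
    rcases hb01 with h|h
    · rw [h, zero_mul]; exact p1
    · rw [h, one_mul]; omega
  exact Nat.mod_eq_of_lt hlt

lemma dd_gab (N k : ℕ) (q : ℝ) (hk : k ≤ N) (a b : Fin 2) :
    (∏ l, cR q (gab N k a b l)) = cR q a ^ k * cR q b ^ (N-k) := by
  have he : ∀ l : Fin N, cR q (gab N k a b l)
      = if (l:ℕ) < N - k then cR q b else cR q a := by
    intro l; simp only [gab]; by_cases hl : (l:ℕ) < N-k <;> simp [hl]
  simp_rw [he]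
  rw [Finset.prod_ite, Finset.prod_const, Finset.prod_const]
  have c1 : (Finset.filter (fun l : Fin N => (l:ℕ) < N - k) Finset.univ).card = N - k := by
    rw [Finset.card_filter]
    rw [Fin.sum_univ_eq_sum_range (fun i => if i < N - k then 1 else 0) N]
    rw [← Finset.card_filter]
    have : Finset.filter (fun i => i < N - k) (Finset.range N) = Finset.range (N-k) := by
      ext i; simp; omega
    rw [this, Finset.card_range]
  have c2 : (Finset.filter (fun l : Fin N => ¬ (l:ℕ) < N - k) Finset.univ).card = k := by
    have := Finset.card_filter_add_card_filter_not
      (s := (Finset.univ : Finset (Fin N))) (p := fun l : Fin N => (l:ℕ) < N - k)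
    rw [c1, Finset.card_univ, Fintype.card_fin] at this
    omega
  rw [c1, c2]
  ring



/-! ### main counterexample -/

def Dvf (N k : ℕ) (q : ℝ) (hkN : k ≤ N) : Fin (2^k) × Fin (2^(N-k)) → ℝ :=
  fun x => ∏ l, cR q ((bipartEquiv N k hkN).symm x l)

lemma Dvf_apply (N k : ℕ) (q : ℝ) (hkN : k ≤ N) (a b : Fin 2) :
    Dvf N k q hkN (bipartEquiv N k hkN (gab N k a b)) = cR q a ^ k * cR q b ^ (N-k) := by
  unfold Dvf
  rw [Equiv.symm_apply_apply]
  exact dd_gab N k q hkN a b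

lemma reidx_diag (N k : ℕ) (q : ℝ) (hkN : k ≤ N) :
    Matrix.reindex (bipartEquiv N k hkN) (bipartEquiv N k hkN)
      (kronPowMap (depolL 2 q) (rho0 N)) = diagC (Dvf N k q hkN) := by
  ext x y
  rw [Matrix.reindex_apply, Matrix.submatrix_apply, kron_rho0]
  simp only [Matrix.of_apply, diagC, EmbeddingLike.apply_eq_iff_eq, Dvf]

lemma main_counter (N k : ℕ) (q : ℝ) (hN : 2 ≤ N) (hk1 : 1 ≤ k) (hk2 : k ≤ N - 1)
    (hkN : k ≤ N) (hq₁ : -1 < q) (hq₂ : q < 1)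
    (hpow : 6 * ((1 - |q|)/2)^N < ((1 + |q|)/2)^N) :
    ¬ ∀ ρ : Matrix (Fin N → Fin 2) (Fin N → Fin 2) ℂ, IsDM ρ →
      IsAbsSep (Matrix.reindex (bipartEquiv N k hkN) (bipartEquiv N k hkN)
        (kronPowMap (depolL 2 q) ρ)) := by
  intro hall
  have hNk1 : 1 ≤ N - k := by omega
  have p2k : (2:ℕ) ≤ 2^k := by
    calc (2:ℕ) = 2^1 := rfl
    _ ≤ 2^k := Nat.pow_le_pow_right (by norm_num) hk1
  have p2m : (2:ℕ) ≤ 2^(N-k) := by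
    calc (2:ℕ) = 2^1 := rfl
    _ ≤ 2^(N-k) := Nat.pow_le_pow_right (by norm_num) hNk1
  set e := bipartEquiv N k hkN with he
  set Dv := Dvf N k q hkN with hDv
  set y1 := e (gab N k 0 0) with hy1
  set y2 := e (gab N k 1 1) with hy2
  set y3 := e (gab N k 0 1) with hy3
  set y4 := e (gab N k 1 0) with hy4
  have f1 : ∀ a b : Fin 2, ((e (gab N k a b)).1 : ℕ) = (a:ℕ) * (2^k - 1) :=
    fun a b => w_fst N k hkN a b
  have f2 : ∀ a b : Fin 2, ((e (gab N k a b)).2 : ℕ) = (b:ℕ) * (2^(N-k) - 1) :=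
    fun a b => w_snd N k hkN a b
  have key1 : ∀ b b' : Fin 2, (e (gab N k 0 b)).1 ≠ (e (gab N k 1 b')).1 := by
    intro b b' hcon
    have hval : ((e (gab N k 0 b)).1 : ℕ) = ((e (gab N k 1 b')).1 : ℕ) := by rw [hcon]
    rw [f1, f1] at hval
    norm_num at hval
    omega
  have key2 : ∀ a a' : Fin 2, (e (gab N k a 0)).2 ≠ (e (gab N k a' 1)).2 := by
    intro a a' hcon
    have hval : ((e (gab N k a 0)).2 : ℕ) = ((e (gab N k a' 1)).2 : ℕ) := by rw [hcon]
    rw [f2, f2] at hval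
    norm_num at hval
    omega
  have h12 : y1 ≠ y2 := fun h => key1 0 1 (congrArg Prod.fst h)
  have hy31 : y3 ≠ y1 := fun h => key2 0 0 (congrArg Prod.snd h).symm
  have hy32 : y3 ≠ y2 := fun h => key1 1 1 (congrArg Prod.fst h)
  have hy41 : y4 ≠ y1 := fun h => key1 0 0 (congrArg Prod.fst h).symm
  have hy42 : y4 ≠ y2 := fun h => key2 1 1 (congrArg Prod.snd h)
  have hy3eq : ((y1.1, y2.2) : Fin (2^k) × Fin (2^(N-k))) = y3 := by
    have e1 : (y1.1 : ℕ) = (y3.1 : ℕ) := by rw [hy1, hy3, f1, f1]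
    have e2 : (y2.2 : ℕ) = (y3.2 : ℕ) := by rw [hy2, hy3, f2, f2]
    exact Prod.ext (Fin.val_injective e1) (Fin.val_injective e2)
  have hy4eq : ((y2.1, y1.2) : Fin (2^k) × Fin (2^(N-k))) = y4 := by
    have e1 : (y2.1 : ℕ) = (y4.1 : ℕ) := by rw [hy2, hy4, f1, f1]
    have e2 : (y1.2 : ℕ) = (y4.2 : ℕ) := by rw [hy1, hy4, f2, f2]
    exact Prod.ext (Fin.val_injective e1) (Fin.val_injective e2)
  -- invoke absolute separability with the rotation unitary
  have hsep := hall (rho0 N) (rho0_DM N) (rotU y1 y2) (rotU_unitary h12)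
  rw [reidx_diag N k q hkN] at hsep
  have hb := sep_entry_bound hsep y1.1 y2.1 y1.2 y2.2
  simp only [Prod.mk.eta] at hb
  rw [hy3eq, hy4eq] at hb
  rw [conj_diag_12 h12 (Dvf N k q hkN)] at hb
  rw [conj_diag_diag hy31 hy32 (Dvf N k q hkN)] at hb
  rw [conj_diag_diag hy41 hy42 (Dvf N k q hkN)] at hb
  rw [Complex.ofReal_re, Complex.ofReal_re] at hb
  have habs : ‖(((Dvf N k q hkN y2 - Dvf N k q hkN y1 : ℝ)):ℂ)/2‖^2
      = (Dvf N k q hkN y2 - Dvf N k q hkN y1)^2/4 := by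
    rw [show ((((Dvf N k q hkN y2 - Dvf N k q hkN y1 : ℝ)):ℂ))/2
        = (((Dvf N k q hkN y2 - Dvf N k q hkN y1)/2 : ℝ):ℂ) from by push_cast; ring]
    rw [Complex.norm_real, Real.norm_eq_abs, sq_abs]
    ring
  rw [habs] at hb
  have hc0 : cR q 0 = (1+q)/2 := by simp [cR]
  have hc1 : cR q 1 = (1-q)/2 := by norm_num [cR]
  have hm1 : Dvf N k q hkN y1 = ((1+q)/2)^N := by
    rw [hy1, Dvf_apply, hc0, ← pow_add]
    congr 1
    omega
  have hm2 : Dvf N k q hkN y2 = ((1-q)/2)^N := by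
    rw [hy2, Dvf_apply, hc1, ← pow_add]
    congr 1
    omega
  have hm3 : Dvf N k q hkN y3 = ((1+q)/2)^k * ((1-q)/2)^(N-k) := by
    rw [hy3, Dvf_apply, hc0, hc1]
  have hm4 : Dvf N k q hkN y4 = ((1-q)/2)^k * ((1+q)/2)^(N-k) := by
    rw [hy4, Dvf_apply, hc1, hc0]
  rw [hm1, hm2, hm3, hm4] at hb
  have hprod : (((1+q)/2)^k * ((1-q)/2)^(N-k)) * (((1-q)/2)^k * ((1+q)/2)^(N-k))
      = ((1+q)/2)^N * ((1-q)/2)^N := by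
    calc (((1+q)/2)^k * ((1-q)/2)^(N-k)) * (((1-q)/2)^k * ((1+q)/2)^(N-k))
        = (((1+q)/2)^k * ((1+q)/2)^(N-k)) * (((1-q)/2)^k * ((1-q)/2)^(N-k)) := by ring
      _ = ((1+q)/2)^(k + (N-k)) * ((1-q)/2)^(k + (N-k)) := by rw [pow_add, pow_add]
      _ = ((1+q)/2)^N * ((1-q)/2)^N := by
          have : k + (N - k) = N := by omega
          rw [this]
  rw [hprod] at hb
  have hc0p : (0:ℝ) < (1+q)/2 := by linarith
  have hc1p : (0:ℝ) < (1-q)/2 := by linarith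
  have hX : (0:ℝ) < ((1+q)/2)^N := pow_pos hc0p N
  have hY : (0:ℝ) < ((1-q)/2)^N := pow_pos hc1p N
  rcases abs_cases q with ⟨hq, _⟩ | ⟨hq, _⟩
  · rw [hq] at hpow
    nlinarith [hb, hpow, hX, hY, mul_lt_mul_of_pos_right hpow hX, mul_pos hY hY]
  · rw [hq] at hpow
    have e1 : (1 - -q)/2 = (1+q)/2 := by ring
    have e2 : (1 + -q)/2 = (1-q)/2 := by ring
    rw [e1, e2] at hpow
    nlinarith [hb, hpow, hX, hY, mul_lt_mul_of_pos_right hpow hY, mul_pos hX hX]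

end Stmt14Aux

theorem stmt14 (N : ℕ) (hN : 2 ≤ N) (q : ℝ) (hq₁ : -1 < q) (hq₂ : q < 1) :
    ((3 + |q|) / (1 + |q|) < Real.sqrt ((1 + |q|) / (1 - |q|)) →
      ∀ (k : ℕ) (_ : 1 ≤ k) (_ : k ≤ N - 1),
        ¬ ∀ ρ : Matrix (Fin N → Fin 2) (Fin N → Fin 2) ℂ, IsDM ρ →
          IsAbsSep (Matrix.reindex (bipartEquiv N k (by omega)) (bipartEquiv N k (by omega))
            (kronPowMap (depolL 2 q) ρ))) ∧
    (1 / (N : ℝ) < |q| →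
      ∀ (k : ℕ) (_ : 1 ≤ k) (_ : k ≤ N - 1),
        ¬ ∀ ρ : Matrix (Fin N → Fin 2) (Fin N → Fin 2) ℂ, IsDM ρ →
          IsAbsSep (Matrix.reindex (bipartEquiv N k (by omega)) (bipartEquiv N k (by omega))
            (kronPowMap (depolL 2 q) ρ))) := by
  have ht0 : 0 ≤ |q| := abs_nonneg q
  have ht1 : |q| < 1 := abs_lt.mpr ⟨hq₁, hq₂⟩
  constructor
  · intro hyp k hk1 hk2
    exact Stmt14Aux.main_counter N k q hN hk1 hk2 (by omega) hq₁ hq₂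
      (Stmt14Aux.hyp1_pow N hN |q| ht0 ht1 hyp)
  · intro hyp k hk1 hk2
    exact Stmt14Aux.main_counter N k q hN hk1 hk2 (by omega) hq₁ hq₂
      (Stmt14Aux.hyp2_pow N hN |q| ht1 hyp)

end
end

section
/- Let m, n ≥ 2 and let α, β be real numbers with 1+α ≥ 0, 1+β ≥ 0, 1+α+β ≥ 0, and define the trace-preserving map Φ_{αβ} on mn×mn complex matrices by Φ_{αβ}[X] = (tr(X)·I_{mn} + αX + βX^⊤)/(mn + α + β). If Φ_{αβ} is absolutely separating with respect to the bipartition m|n, then max(|α+β|, |α−β|) ≤ 2. -/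
open Matrix Kronecker BigOperators
open scoped ComplexOrder InnerProductSpace

noncomputable section


/-- Transposition as a `ℂ`-linear map. -/
def transposeLM (ι : Type*) [Fintype ι] :
    Matrix ι ι ℂ →ₗ[ℂ] Matrix ι ι ℂ where
  toFun X := Xᵀ
  map_add' := by intro X Y; ext i j; simp
  map_smul' := by intro c X; ext i j; simp

/-- The map `Φ_{αβ}[X] = (tr X · I + α X + β Xᵀ)/(d + α + β)`. -/
def ctitMap {ι : Type*} [Fintype ι] [DecidableEq ι] (α β : ℝ) :
    Matrix ι ι ℂ →ₗ[ℂ] Matrix ι ι ℂ :=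
  ((((Fintype.card ι : ℝ) + α + β : ℝ) : ℂ))⁻¹ •
    ((Matrix.traceLinearMap ι ℂ ℂ).smulRight (1 : Matrix ι ι ℂ) +
      (α : ℂ) • LinearMap.id + (β : ℂ) • transposeLM ι)

/-- 2×2 principal minor bound for PSD matrices. -/
lemma psd_entry_sq {ι : Type*} [Fintype ι] [DecidableEq ι] {ρ : Matrix ι ι ℂ}
    (hρ : ρ.PosSemidef) (i j : ι) :
    ‖ρ i j‖ ^ 2 ≤ (ρ i i).re * (ρ j j).re := by
  obtain ⟨B, rfl⟩ : ∃ B : Matrix ι ι ℂ, ρ = Bᴴ * B := by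
    open scoped MatrixOrder Matrix.Norms.L2Operator in
    obtain ⟨B, hB⟩ := CStarAlgebra.nonneg_iff_eq_star_mul_self.mp hρ.nonneg
    exact ⟨B, hB⟩
  set u : EuclideanSpace ℂ ι := WithLp.toLp 2 (fun k => B k i) with hu
  set v : EuclideanSpace ℂ ι := WithLp.toLp 2 (fun k => B k j) with hv
  have h1 : (Bᴴ * B) i j = ⟪u, v⟫_ℂ := by
    simp [Matrix.mul_apply, PiLp.inner_apply, hu, hv, Matrix.conjTranspose_apply, mul_comm]
  have h2 : ((Bᴴ * B) i i).re = ‖u‖ ^ 2 := by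
    rw [@norm_sq_eq_re_inner ℂ]
    simp [Matrix.mul_apply, PiLp.inner_apply, hu, Matrix.conjTranspose_apply, mul_comm,
      -inner_self_eq_norm_sq_to_K]
  have h3 : ((Bᴴ * B) j j).re = ‖v‖ ^ 2 := by
    rw [@norm_sq_eq_re_inner ℂ]
    simp [Matrix.mul_apply, PiLp.inner_apply, hv, Matrix.conjTranspose_apply, mul_comm,
      -inner_self_eq_norm_sq_to_K]
  have h4 := norm_inner_le_norm (𝕜 := ℂ) u v
  rw [h1, h2, h3]
  calc ‖⟪u, v⟫_ℂ‖ ^ 2 = ‖⟪u, v⟫_ℂ‖ ^ 2 := rfl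
    _ ≤ (‖u‖ * ‖v‖) ^ 2 := pow_le_pow_left₀ (norm_nonneg _) h4 2
    _ = ‖u‖ ^ 2 * ‖v‖ ^ 2 := by ring

lemma psd_diag_re_nonneg {ι : Type*} [Fintype ι] [DecidableEq ι] {ρ : Matrix ι ι ℂ}
    (hρ : ρ.PosSemidef) (i : ι) : 0 ≤ (ρ i i).re := by
  have := hρ.re_dotProduct_nonneg (Pi.single i 1)
  simpa [dotProduct, Matrix.mulVec, Pi.single_apply] using this

lemma psd_diag_real {ι : Type*} [Fintype ι] {ρ : Matrix ι ι ℂ}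
    (hρ : ρ.IsHermitian) (i : ι) : ρ i i = ((ρ i i).re : ℂ) := by
  have h := congrFun (congrFun hρ i) i
  simp only [Matrix.conjTranspose_apply] at h
  have him : (ρ i i).im = 0 := by
    have := congrArg Complex.im h
    simp at this
    linarith
  apply Complex.ext
  · simp
  · simp [him]

/-- Separability entry witness. -/
lemma sep_witness {ι κ : Type*} [Fintype ι] [Fintype κ] [DecidableEq ι] [DecidableEq κ]
    {ρ : Matrix (ι × κ) (ι × κ) ℂ} (h : IsSep ρ) (a b : ι) (c d : κ) :
    ‖ρ (a, c) (b, d)‖ ^ 2 ≤ (ρ (a, d) (a, d)).re * (ρ (b, c) (b, c)).re := by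
  obtain ⟨k, p, A, B, hp, _, hA, hB, hρ⟩ := h
  have entry : ∀ P Q : ι × κ, ρ P Q = ∑ i, (p i : ℂ) * (A i P.1 Q.1 * B i P.2 Q.2) := by
    intro P Q
    rw [hρ]
    simp [Matrix.sum_apply, Matrix.kroneckerMap_apply, Matrix.smul_apply]
  set x : Fin k → ℝ := fun i => p i * ((A i a a).re * (B i d d).re) with hxdef
  set y : Fin k → ℝ := fun i => p i * ((A i b b).re * (B i c c).re) with hydef
  have hx : ∀ i, 0 ≤ x i := fun i => mul_nonneg (hp i)
    (mul_nonneg (psd_diag_re_nonneg (hA i).1 a) (psd_diag_re_nonneg (hB i).1 d))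
  have hy : ∀ i, 0 ≤ y i := fun i => mul_nonneg (hp i)
    (mul_nonneg (psd_diag_re_nonneg (hA i).1 b) (psd_diag_re_nonneg (hB i).1 c))
  have hdiag1 : (ρ (a, d) (a, d)).re = ∑ i, x i := by
    rw [entry]
    rw [Complex.re_sum]
    refine Finset.sum_congr rfl fun i _ => ?_
    rw [psd_diag_real (hA i).1.1 a, psd_diag_real (hB i).1.1 d]
    push_cast
    simp [hxdef]
  have hdiag2 : (ρ (b, c) (b, c)).re = ∑ i, y i := by
    rw [entry]
    rw [Complex.re_sum]
    refine Finset.sum_congr rfl fun i _ => ?_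
    rw [psd_diag_real (hA i).1.1 b, psd_diag_real (hB i).1.1 c]
    push_cast
    simp [hydef]
  have habs : ‖ρ (a, c) (b, d)‖ ≤ ∑ i, Real.sqrt (x i * y i) := by
    rw [entry]
    refine (norm_sum_le _ _).trans (Finset.sum_le_sum fun i _ => ?_)
    have hterm : ‖(p i : ℂ) * (A i a b * B i c d)‖ ^ 2 ≤ x i * y i := by
      have h1 := psd_entry_sq (hA i).1 a b
      have h2 := psd_entry_sq (hB i).1 c d
      have hpi := hp i
      have ha1 := psd_diag_re_nonneg (hA i).1 a
      have hb1 := psd_diag_re_nonneg (hB i).1 c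
      simp only [norm_mul, Complex.norm_real, Real.norm_eq_abs, abs_of_nonneg hpi, hxdef, hydef]
      have e1 : (p i * (‖A i a b‖ * ‖B i c d‖)) ^ 2
          = p i ^ 2 * (‖A i a b‖ ^ 2 * ‖B i c d‖ ^ 2) := by ring
      rw [e1]
      have e2 : p i * ((A i a a).re * (B i d d).re) * (p i * ((A i b b).re * (B i c c).re))
          = p i ^ 2 * (((A i a a).re * (A i b b).re) * ((B i c c).re * (B i d d).re)) := by ring
      rw [e2]
      have h12 : ‖A i a b‖ ^ 2 * ‖B i c d‖ ^ 2
          ≤ ((A i a a).re * (A i b b).re) * ((B i c c).re * (B i d d).re) :=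
        mul_le_mul h1 h2 (sq_nonneg _)
          (mul_nonneg (psd_diag_re_nonneg (hA i).1 a) (psd_diag_re_nonneg (hA i).1 b))
      exact mul_le_mul_of_nonneg_left h12 (sq_nonneg _)
    calc ‖(p i : ℂ) * (A i a b * B i c d)‖
        = Real.sqrt (‖(p i : ℂ) * (A i a b * B i c d)‖ ^ 2) :=
          (Real.sqrt_sq (norm_nonneg _)).symm
      _ ≤ Real.sqrt (x i * y i) := Real.sqrt_le_sqrt hterm
  have hCS : (∑ i, Real.sqrt (x i * y i)) ^ 2 ≤ (∑ i, x i) * (∑ i, y i) :=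
    Finset.sum_sq_le_sum_mul_sum_of_sq_eq_mul Finset.univ
      (fun i _ => hx i) (fun i _ => hy i)
      (fun i _ => Real.sq_sqrt (mul_nonneg (hx i) (hy i)))
  rw [hdiag1, hdiag2]
  calc ‖ρ (a, c) (b, d)‖ ^ 2 ≤ (∑ i, Real.sqrt (x i * y i)) ^ 2 :=
      pow_le_pow_left₀ (norm_nonneg _) habs 2
    _ ≤ (∑ i, x i) * (∑ i, y i) := hCS

lemma ctitMap_apply {ι : Type*} [Fintype ι] [DecidableEq ι] (α β : ℝ)
    (ρ : Matrix ι ι ℂ) (P Q : ι) :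
    ctitMap α β ρ P Q = (((Fintype.card ι : ℝ) + α + β : ℝ) : ℂ)⁻¹ *
      (ρ.trace * (1 : Matrix ι ι ℂ) P Q + (α : ℂ) * ρ P Q + (β : ℂ) * ρ Q P) := by
  simp only [ctitMap, LinearMap.smul_apply, LinearMap.add_apply, LinearMap.smulRight_apply,
    Matrix.traceLinearMap_apply, LinearMap.id_apply, transposeLM, LinearMap.coe_mk,
    AddHom.coe_mk, Matrix.smul_apply, Matrix.add_apply, Matrix.transpose_apply,
    smul_eq_mul]
  try ring

lemma sum_two {ι : Type*} [Fintype ι] [DecidableEq ι] (f : ι → ℂ) (a b : ι) (hab : a ≠ b)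
    (h : ∀ x, x ≠ a → x ≠ b → f x = 0) : ∑ x, f x = f a + f b := by
  rw [← Finset.sum_subset (Finset.subset_univ ({a, b} : Finset ι))]
  · rw [Finset.sum_pair hab]
  · intro x _ hx
    simp only [Finset.mem_insert, Finset.mem_singleton, not_or] at hx
    exact h x hx.1 hx.2

lemma pure_psd {ι : Type*} [Fintype ι] (ψ : ι → ℂ) :
    ((1/2 : ℂ) • Matrix.vecMulVec ψ (star ψ)).PosSemidef := by
  refine Matrix.PosSemidef.of_dotProduct_mulVec_nonneg ?_ ?_
  · ext i j
    simp [Matrix.conjTranspose_apply, Matrix.vecMulVec_apply, Matrix.smul_apply,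
      Pi.star_apply, mul_comm]
  · intro v
    have key : star v ⬝ᵥ ((1/2 : ℂ) • Matrix.vecMulVec ψ (star ψ)) *ᵥ v
        = (1/2 : ℂ) * ((∑ j, (starRingEnd ℂ) (ψ j) * v j)
          * (starRingEnd ℂ) (∑ j, (starRingEnd ℂ) (ψ j) * v j)) := by
      simp only [dotProduct, Matrix.mulVec, Matrix.smul_apply,
        Matrix.vecMulVec_apply, Pi.star_apply, smul_eq_mul, map_sum, _root_.map_mul,
        RingHom.id_apply, Complex.conj_conj, Finset.mul_sum, Finset.sum_mul]
      refine Finset.sum_congr rfl fun i _ => Finset.sum_congr rfl fun j _ => ?_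
      simp only [_root_.map_mul, Complex.conj_conj, Complex.star_def]
      ring
    rw [key, mul_comm (∑ j, (starRingEnd ℂ) (ψ j) * v j), Complex.conj_mul']
    have hcast : (1/2 : ℂ) * ((‖∑ j, (starRingEnd ℂ) (ψ j) * v j‖ : ℝ) : ℂ) ^ 2
        = (((1/2 : ℝ) * ‖∑ j, (starRingEnd ℂ) (ψ j) * v j‖ ^ 2 : ℝ) : ℂ) := by
      push_cast; ring
    rw [hcast, Complex.zero_le_real]
    positivity

theorem stmt18 (m n : ℕ) (hm : 2 ≤ m) (hn : 2 ≤ n) (α β : ℝ)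
    (hα : 0 ≤ 1 + α) (hβ : 0 ≤ 1 + β) (hαβ : 0 ≤ 1 + α + β)
    (hAS : ∀ ρ : Matrix (Fin m × Fin n) (Fin m × Fin n) ℂ, IsDM ρ →
      IsAbsSep (ctitMap α β ρ)) :
    max |α + β| |α - β| ≤ 2 := by
  have key : ∀ c : ℂ, ‖c‖ = 1 →
      ‖(α : ℂ) * (starRingEnd ℂ) c + (β : ℂ) * c‖ ≤ 2 := by
    intro c hc
    set i0 : Fin m := ⟨0, by omega⟩ with hi0def
    set i1 : Fin m := ⟨1, by omega⟩ with hi1def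
    set j0 : Fin n := ⟨0, by omega⟩ with hj0def
    set j1 : Fin n := ⟨1, by omega⟩ with hj1def
    have hi : i0 ≠ i1 := by simp [hi0def, hi1def, Fin.ext_iff]
    have hj : j0 ≠ j1 := by simp [hj0def, hj1def, Fin.ext_iff]
    set P0 : Fin m × Fin n := (i0, j0) with hP0def
    set P1 : Fin m × Fin n := (i1, j1) with hP1def
    have hP01 : P0 ≠ P1 := fun h => hi (congrArg Prod.fst h)
    set ψ : Fin m × Fin n → ℂ := fun P => if P = P0 then 1 else if P = P1 then c else 0
      with hψdef
    have hψ0 : ψ P0 = 1 := by simp [hψdef]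
    have hψ1 : ψ P1 = c := by simp [hψdef, hP01.symm]
    have hψz : ∀ P, P ≠ P0 → P ≠ P1 → ψ P = 0 := by
      intro P h1 h2; simp [hψdef, h1, h2]
    set ρ0 : Matrix (Fin m × Fin n) (Fin m × Fin n) ℂ :=
      (1/2 : ℂ) • Matrix.vecMulVec ψ (star ψ) with hρ0def
    have hρ0app : ∀ P Q, ρ0 P Q = (1/2 : ℂ) * (ψ P * (starRingEnd ℂ) (ψ Q)) := by
      intro P Q
      simp [hρ0def, Matrix.smul_apply, Matrix.vecMulVec_apply, Pi.star_apply,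
        smul_eq_mul, Complex.star_def, mul_assoc]
    have hcc : c * (starRingEnd ℂ) c = 1 := by
      rw [Complex.mul_conj, ← Complex.sq_norm, hc]; norm_num
    have hz : ∀ P, P ≠ P0 → P ≠ P1 → ρ0 P P = 0 := fun P h1 h2 => by
      rw [hρ0app, hψz P h1 h2]; simp
    have hDM : IsDM ρ0 := by
      refine ⟨pure_psd ψ, ?_⟩
      calc ρ0.trace = ∑ P, ρ0 P P := rfl
        _ = ρ0 P0 P0 + ρ0 P1 P1 := sum_two _ P0 P1 hP01 hz
        _ = 1 := by rw [hρ0app, hρ0app, hψ0, hψ1, hcc]; norm_num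
    have hsep : IsSep (ctitMap α β ρ0) := by
      have h := hAS ρ0 hDM 1 (by simp)
      simpa using h
    have hwit := sep_witness hsep i0 i1 j0 j1
    set D : ℝ := ((Fintype.card (Fin m × Fin n) : ℝ) + α + β) with hDdef
    have hcard : (Fintype.card (Fin m × Fin n) : ℝ) = (m : ℝ) * n := by
      simp [Fintype.card_prod]
    have hD : 0 < D := by
      rw [hDdef, hcard]
      have h4 : (4 : ℝ) ≤ (m : ℝ) * n := by
        have : (4 : ℕ) ≤ m * n := Nat.mul_le_mul hm hn
        exact_mod_cast this
      linarith
    -- off-diagonal entry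
    have hoff : ctitMap α β ρ0 (i0, j0) (i1, j1)
        = (D : ℂ)⁻¹ * (((α : ℂ) * (starRingEnd ℂ) c + (β : ℂ) * c) / 2) := by
      rw [ctitMap_apply]
      have h1 : (1 : Matrix (Fin m × Fin n) (Fin m × Fin n) ℂ) (i0, j0) (i1, j1) = 0 :=
        Matrix.one_apply_ne hP01
      rw [h1]
      rw [show ((i0, j0) : Fin m × Fin n) = P0 from rfl, show ((i1, j1) : Fin m × Fin n) = P1 from rfl]
      rw [hρ0app P0 P1, hρ0app P1 P0, hψ0, hψ1, ← hDdef]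
      simp only [_root_.map_one, mul_one, one_mul, mul_zero, zero_add]
      ring
    have hdiag : ∀ P : Fin m × Fin n, P ≠ P0 → P ≠ P1 →
        ctitMap α β ρ0 P P = (D : ℂ)⁻¹ := by
      intro P h1 h2
      rw [ctitMap_apply]
      rw [hρ0app P P, hψz P h1 h2, Matrix.one_apply_eq, hDM.2, ← hDdef]
      simp
    have hne1 : ((i0, j1) : Fin m × Fin n) ≠ P0 := fun h => hj (congrArg Prod.snd h).symm
    have hne2 : ((i0, j1) : Fin m × Fin n) ≠ P1 := fun h => hi (congrArg Prod.fst h)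
    have hne3 : ((i1, j0) : Fin m × Fin n) ≠ P0 := fun h => hi (congrArg Prod.fst h).symm
    have hne4 : ((i1, j0) : Fin m × Fin n) ≠ P1 := fun h => hj (congrArg Prod.snd h)
    rw [hoff, hdiag _ hne1 hne2, hdiag _ hne3 hne4] at hwit
    have hre : ((D : ℂ)⁻¹).re = D⁻¹ := by
      rw [← Complex.ofReal_inv, Complex.ofReal_re]
    rw [hre] at hwit
    have habs : ‖(D : ℂ)⁻¹ * (((α : ℂ) * (starRingEnd ℂ) c + (β : ℂ) * c) / 2)‖
        = D⁻¹ * (‖(α : ℂ) * (starRingEnd ℂ) c + (β : ℂ) * c‖ / 2) := by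
      rw [norm_mul, norm_div, ← Complex.ofReal_inv, Complex.norm_real, Real.norm_eq_abs,
        abs_of_nonneg (inv_nonneg.mpr hD.le)]
      norm_num
    rw [habs] at hwit
    set s : ℝ := ‖(α : ℂ) * (starRingEnd ℂ) c + (β : ℂ) * c‖ with hsdef
    have hs : 0 ≤ s := norm_nonneg _
    have hDinv : 0 < D⁻¹ := inv_pos.mpr hD
    nlinarith [sq_nonneg (s - 2), mul_pos hDinv hDinv, sq_nonneg (D⁻¹ * (s/2))]
  apply max_le
  · have h := key 1 (by simp)
    rw [_root_.map_one, mul_one, mul_one, ← Complex.ofReal_add, Complex.norm_real, Real.norm_eq_abs] at h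
    exact h
  · have h := key Complex.I (by simp)
    rw [Complex.conj_I] at h
    have : (α : ℂ) * (-Complex.I) + (β : ℂ) * Complex.I = ((β - α : ℝ) : ℂ) * Complex.I := by
      push_cast; ring
    rw [this, norm_mul, Complex.norm_I, Complex.norm_real, Real.norm_eq_abs, mul_one] at h
    rwa [abs_sub_comm] at h


end
end
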